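/- For all j ≥ 1, n ≥ 1, and r ≥ 0, p^r_j(n) = p^r_{j−1}(n) + Σ_{s=0}^{n−1} C(n,s) p^r_j(s). -/

import Mathlib

/-- `p r j n` : the number of restricted barred preferential arrangements of an `n`-set with
`r` restricted sections and `j` free sections, given by the convergent series
`p^r_j(n) = \sum_{s=0}^\infty C(j+s-1, s) (r+s)^n / 2^(j+s)`
(the coefficient of `m^n/n!` in `e^{rm}/(2-e^m)^j`). -/
noncomputable def p (r j n : ℕ) : ℝ :=
  ∑' s : ℕ, ((j + s - 1).choose s : ℝ) * ((r + s : ℕ) : ℝ) ^ n / 2 ^ (j + s)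

private lemma choose_bound (j s : ℕ) : (j + s - 1).choose s ≤ (j + s + 1) ^ j := by
  rcases Nat.eq_zero_or_pos j with rfl | hj
  · rcases Nat.eq_zero_or_pos s with rfl | hs
    · simp
    · rw [Nat.choose_eq_zero_of_lt (by omega)]; positivity
  · have hsym : (j + s - 1).choose s = (j + s - 1).choose (j - 1) := by
      have h := Nat.choose_symm (n := j + s - 1) (k := s) (by omega)
      rw [show j + s - 1 - s = j - 1 from by omega] at h
      exact h.symm
    rw [hsym]
    exact le_trans (Nat.choose_le_pow _ _)
      (le_trans (Nat.pow_le_pow_left (by omega) _)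
        (Nat.pow_le_pow_right (by omega) (by omega)))

private lemma summable_core (K : ℕ) :
    Summable (fun s : ℕ => ((s : ℝ) + 2) ^ K / 2 ^ s) := by
  have h := summable_pow_mul_geometric_of_norm_lt_one (R := ℝ) K
    (r := 1/2) (by rw [Real.norm_eq_abs, abs_of_nonneg (by norm_num : (0:ℝ) ≤ 1/2)]; norm_num)
  have h2 := (summable_nat_add_iff 2).2 h
  exact (h2.mul_left 4).congr fun s => by push_cast; field_simp; ring_nf; rw [← mul_pow]; norm_num

private lemma summable_main (j a n : ℕ) :
    Summable (fun s : ℕ => ((j + s - 1).choose s : ℝ) * ((a + s : ℕ) : ℝ) ^ n / 2 ^ (j + s)) := by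
  apply Summable.of_nonneg_of_le (fun s => by positivity) (fun s => ?_)
    ((summable_core (j + n)).mul_left (((j : ℝ) + 1) ^ j * ((a : ℝ) + 1) ^ n))
  have hc : ((j + s - 1).choose s : ℝ) ≤ ((j : ℝ) + s + 1) ^ j := by
    have := choose_bound j s
    calc ((j + s - 1).choose s : ℝ) ≤ (((j + s + 1) ^ j : ℕ) : ℝ) := by exact_mod_cast this
      _ = ((j : ℝ) + s + 1) ^ j := by push_cast; ring
  have h1 : ((j : ℝ) + s + 1) ≤ ((j : ℝ) + 1) * ((s : ℝ) + 2) := by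
    have hs : (0:ℝ) ≤ (s:ℝ) := s.cast_nonneg
    have hjj : (0:ℝ) ≤ (j:ℝ) := j.cast_nonneg
    nlinarith
  have h2 : ((a : ℝ) + s) ≤ ((a : ℝ) + 1) * ((s : ℝ) + 2) := by
    have hs : (0:ℝ) ≤ (s:ℝ) := s.cast_nonneg
    have haa : (0:ℝ) ≤ (a:ℝ) := a.cast_nonneg
    nlinarith
  calc ((j + s - 1).choose s : ℝ) * ((a + s : ℕ) : ℝ) ^ n / 2 ^ (j + s)
      ≤ ((j : ℝ) + s + 1) ^ j * ((a : ℝ) + s) ^ n / 2 ^ s := by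
        apply div_le_div₀ (by positivity) ?_ (by positivity)
          (pow_le_pow_right₀ one_le_two (Nat.le_add_left _ _))
        push_cast
        exact mul_le_mul hc (by norm_num) (by positivity) (by positivity)
    _ ≤ (((j : ℝ) + 1) * ((s : ℝ) + 2)) ^ j * (((a : ℝ) + 1) * ((s : ℝ) + 2)) ^ n / 2 ^ s := by
        apply div_le_div₀ (by positivity) ?_ (by positivity) le_rfl
        apply mul_le_mul (pow_le_pow_left₀ (by positivity) h1 _)
          (pow_le_pow_left₀ (by positivity) h2 _) (by positivity) (by positivity)
    _ = ((j : ℝ) + 1) ^ j * ((a : ℝ) + 1) ^ n * (((s : ℝ) + 2) ^ (j + n) / 2 ^ s) := by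
        rw [mul_pow, mul_pow, pow_add]; ring

private lemma binom_aux (x : ℝ) (n : ℕ) :
    ∑ s ∈ Finset.range n, (n.choose s : ℝ) * x ^ s = (x + 1) ^ n - x ^ n := by
  have h := add_pow x 1 n
  simp only [one_pow, mul_one] at h
  rw [Finset.sum_range_succ, Nat.choose_self, Nat.cast_one, mul_one] at h
  have h2 : ∑ s ∈ Finset.range n, (n.choose s : ℝ) * x ^ s
      = ∑ s ∈ Finset.range n, x ^ s * (n.choose s : ℝ) :=
    Finset.sum_congr rfl fun s _ => mul_comm _ _
  rw [h2]; linarith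

theorem stmt6 (r j n : ℕ) (hj : 1 ≤ j) (hn : 1 ≤ n) :
    p r j n = p r (j - 1) n + ∑ s ∈ Finset.range n, (n.choose s : ℝ) * p r j s := by
  obtain ⟨j, rfl⟩ : ∃ k, j = k + 1 := ⟨j - 1, by omega⟩
  set a : ℕ → ℕ → ℝ :=
    fun k s => ((j + s).choose s : ℝ) * ((r + s : ℕ) : ℝ) ^ k / 2 ^ (j + 1 + s) with ha_def
  set b : ℕ → ℝ :=
    fun s => ((j + s - 1).choose s : ℝ) * ((r + s : ℕ) : ℝ) ^ n / 2 ^ (j + s) with hb_def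
  set e : ℕ → ℝ :=
    fun s => ((j + s).choose s : ℝ) * ((r + 1 + s : ℕ) : ℝ) ^ n / 2 ^ (j + 1 + s) with he_def
  have hp : ∀ k, p r (j + 1) k = ∑' s, a k s := by
    intro k
    exact tsum_congr fun s => by rw [ha_def, show j + 1 + s - 1 = j + s from by omega]
  have hpb : p r (j + 1 - 1) n = ∑' s, b s := by
    rw [show j + 1 - 1 = j from rfl]; rfl
  have ha : ∀ k, Summable (a k) := fun k =>
    (summable_main (j + 1) r k).congr fun s => by
      rw [ha_def, show j + 1 + s - 1 = j + s from by omega]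
  have hb : Summable b := summable_main j r n
  have he : Summable e :=
    (summable_main (j + 1) (r + 1) n).congr fun s => by
      rw [he_def, show j + 1 + s - 1 = j + s from by omega]
  have stepA : ∑ s ∈ Finset.range n, (n.choose s : ℝ) * p r (j + 1) s
      = (∑' t, e t) - ∑' t, a n t := by
    have h1 : ∀ s, (n.choose s : ℝ) * p r (j + 1) s = ∑' t, (n.choose s : ℝ) * a s t := by
      intro s; rw [hp s, ← tsum_mul_left]
    calc ∑ s ∈ Finset.range n, (n.choose s : ℝ) * p r (j + 1) s
        = ∑ s ∈ Finset.range n, ∑' t, (n.choose s : ℝ) * a s t :=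
          Finset.sum_congr rfl fun s _ => h1 s
      _ = ∑' t, ∑ s ∈ Finset.range n, (n.choose s : ℝ) * a s t :=
          (Summable.tsum_finsetSum (fun s _ => (ha s).mul_left _)).symm
      _ = ∑' t, (e t - a n t) := by
          refine tsum_congr fun t => ?_
          calc ∑ s ∈ Finset.range n, (n.choose s : ℝ) * a s t
              = (((j + t).choose t : ℝ) / 2 ^ (j + 1 + t)) *
                  ∑ s ∈ Finset.range n, (n.choose s : ℝ) * ((r + t : ℕ) : ℝ) ^ s := by
                rw [Finset.mul_sum]
                exact Finset.sum_congr rfl fun s _ => by rw [ha_def]; ring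
            _ = e t - a n t := by
                rw [binom_aux, ha_def, he_def]; push_cast; ring
      _ = (∑' t, e t) - ∑' t, a n t := Summable.tsum_sub he (ha n)
  rw [hp n, hpb, stepA]
  have key : ∑' t, e t = 2 * (∑' t, a n t) - ∑' t, b t := by
    set g : ℕ → ℝ := fun t => 2 * a n t - b t with hg_def
    have hg : Summable g := ((ha n).mul_left 2).sub hb
    have hg0 : g 0 = 0 := by
      simp only [hg_def, ha_def, hb_def, Nat.add_zero, Nat.choose_zero_right, Nat.cast_one,
        one_mul, pow_succ]
      ring
    have hgs : ∀ t, g (t + 1) = e t := by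
      intro t
      simp only [hg_def, ha_def, hb_def, he_def]
      simp only [show j + 1 + (t + 1) = ((j + t) + 1) + 1 from by omega,
        show j + (t + 1) = (j + t) + 1 from by omega,
        show j + 1 + t = (j + t) + 1 from by omega,
        show r + (t + 1) = r + 1 + t from by omega]
      simp only [Nat.choose_succ_succ, Nat.add_sub_cancel, pow_succ]
      push_cast
      ring
    have h1 : ∑' t, g t = g 0 + ∑' t, g (t + 1) := Summable.tsum_eq_zero_add hg
    have h2 : ∑' t, g (t + 1) = ∑' t, e t := tsum_congr hgs
    have h3 : ∑' t, g t = 2 * (∑' t, a n t) - ∑' t, b t := by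
      rw [hg_def]
      rw [Summable.tsum_sub ((ha n).mul_left 2) hb, tsum_mul_left]
    linarith [h1, h2, h3, hg0]
  linarith [key]
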